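/- arXiv:2509.06761 — 7 statements merged into one kernel-verified Lean document; each statement's English description precedes it below -/
import Mathlib

section
/- Let Γ be a numerical semigroup and ℓ ≥ 1. Every Γ-subsemimodule Δ ⊆ Γ with #(Γ \ Δ) = ℓ + 1 arises by deleting a minimal generator from some Γ-subsemimodule Δ' with #(Γ \ Δ') = ℓ; specifically, one may take Δ' = Δ ∪ {max(Γ \ Δ)} and delete the generator max(Γ \ Δ). -/
/-- every Γ-subsemimodule with complement of size ℓ+1 arises by
deleting the minimal generator max(Γ \ Δ) from Δ' := Δ ∪ {max(Γ \ Δ)}, a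
Γ-subsemimodule with complement of size ℓ. -/
theorem stmt3 (Γ Δ : Set ℕ) (ℓ : ℕ) (hℓ : 1 ≤ ℓ)
    (hΓ0 : 0 ∈ Γ) (hΓadd : ∀ a ∈ Γ, ∀ b ∈ Γ, a + b ∈ Γ) (hΓcof : (Γᶜ).Finite)
    (hΔΓ : Δ ⊆ Γ) (hmod : ∀ d ∈ Δ, ∀ g ∈ Γ, d + g ∈ Δ)
    (hfin : (Γ \ Δ).Finite) (hcard : (Γ \ Δ).ncard = ℓ + 1)
    (γΔ : ℕ) (hγΔ : γΔ ∈ Γ \ Δ) (hmax : ∀ x ∈ Γ \ Δ, x ≤ γΔ) :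
    (Δ ∪ {γΔ} ⊆ Γ) ∧ (∀ d ∈ Δ ∪ {γΔ}, ∀ g ∈ Γ, d + g ∈ Δ ∪ {γΔ}) ∧
      (Γ \ (Δ ∪ {γΔ})).ncard = ℓ ∧ γΔ ∈ Δ ∪ {γΔ} ∧
      (¬ ∃ d ∈ Δ ∪ {γΔ}, ∃ g ∈ Γ, g ≠ 0 ∧ γΔ = d + g) ∧
      (Δ ∪ {γΔ}) \ {γΔ} = Δ := by
  obtain ⟨hγΓ, hγnΔ⟩ := hγΔ
  refine ⟨?_, ?_, ?_, Or.inr rfl, ?_, ?_⟩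
  · intro x hx
    rcases hx with hx | hx
    · exact hΔΓ hx
    · simp only [Set.mem_singleton_iff] at hx; exact hx ▸ hγΓ
  · intro d hd g hg
    rcases hd with hd | hd
    · exact Or.inl (hmod d hd g hg)
    · simp only [Set.mem_singleton_iff] at hd
      subst hd
      rcases Nat.eq_zero_or_pos g with rfl | hg0
      · exact Or.inr rfl
      · left
        by_contra hn
        have : d + g ∈ Γ \ Δ := ⟨hΓadd d hγΓ g hg, hn⟩
        have := hmax _ this
        omega
  · have hset : Γ \ (Δ ∪ {γΔ}) = (Γ \ Δ) \ {γΔ} := by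
      ext x; simp [Set.mem_diff]; tauto
    rw [hset, Set.ncard_diff_singleton_of_mem (show γΔ ∈ Γ \ Δ from ⟨hγΓ, hγnΔ⟩), hcard]
    omega
  · rintro ⟨d, hd, g, hg, hg0, heq⟩
    rcases hd with hd | hd
    · exact hγnΔ (heq ▸ hmod d hd g hg)
    · simp only [Set.mem_singleton_iff] at hd
      subst hd
      omega
  · ext x
    simp only [Set.mem_diff, Set.mem_union, Set.mem_singleton_iff]
    constructor
    · rintro ⟨hx | hx, hne⟩
      · exact hx
      · exact absurd hx hne
    · intro hx
      exact ⟨Or.inl hx, fun h => hγnΔ (h ▸ hx)⟩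
end

section
/- Let Γ = ⟨k, n⟩ with gcd(k, n) = 1 and k < n. There is a bijection between Γ-subsemimodules of Γ and sequences (φ_0, φ_1, …, φ_{k−1}) of natural numbers satisfying φ_{k−1} ≤ φ_{k−2} ≤ ⋯ ≤ φ_0 ≤ φ_{k−1} + n; explicitly, the sequence φ corresponds to the Γ-subsemimodule generated by {φ_j·k + j·n : j = 0, …, k−1}, and #(Γ \ Δ) = φ_0 + φ_1 + ⋯ + φ_{k−1}. -/
/-- for Γ = ⟨k, n⟩ with gcd(k,n)=1, k < n, Γ-subsemimodules of Γ
are in bijection with sequences (φ_0,…,φ_{k−1}) with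
φ_{k−1} ≤ ⋯ ≤ φ_0 ≤ φ_{k−1} + n, via φ ↦ ⋃_j (φ_j k + j n + Γ), and then
#(Γ \ Δ) = ∑ φ_j. -/
theorem stmt8 (k n : ℕ) (hk : 0 < k) (hkn : k < n) (hcop : Nat.Coprime k n)
    (Γ : Set ℕ) (hΓ : Γ = {m | ∃ a b : ℕ, m = a * k + b * n})
    (F : (Fin k → ℕ) → Set ℕ)
    (hF : F = fun φ => ⋃ j : Fin k, {m | ∃ g ∈ Γ, m = φ j * k + (j : ℕ) * n + g})
    (valid : (Fin k → ℕ) → Prop)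
    (hvalid : valid = fun φ => (∀ i j : Fin k, i ≤ j → φ j ≤ φ i) ∧
      φ ⟨0, hk⟩ ≤ φ ⟨k - 1, Nat.sub_lt hk one_pos⟩ + n)
    (isMod : Set ℕ → Prop)
    (hisMod : isMod = fun Δ => Δ.Nonempty ∧ Δ ⊆ Γ ∧ ∀ d ∈ Δ, ∀ g ∈ Γ, d + g ∈ Δ) :
    (∀ φ ψ, valid φ → valid ψ → F φ = F ψ → φ = ψ) ∧
    (∀ φ, valid φ → isMod (F φ)) ∧
    (∀ Δ, isMod Δ → ∃ φ, valid φ ∧ F φ = Δ) ∧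
    (∀ φ, valid φ → (Γ \ F φ).ncard = ∑ j, φ j) := by
  subst hΓ hF hvalid hisMod
  classical
  -- uniqueness of canonical form a*k + j*n with j < k
  have huniq : ∀ {a a' j j' : ℕ}, j < k → j' < k →
      a * k + j * n = a' * k + j' * n → a = a' ∧ j = j' := by
    intro a a' j j' hj hj' h
    have h1 : (j * n) % k = (j' * n) % k := by
      rw [Nat.mul_comm a k, Nat.mul_comm a' k] at h
      have := congrArg (· % k) h
      simpa only [Nat.mul_add_mod] using this
    have h2 : j ≡ j' [MOD k] :=
      Nat.ModEq.cancel_right_of_coprime hcop h1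
    have hjj : j = j' := by
      have h3 : j % k = j' % k := h2
      rwa [Nat.mod_eq_of_lt hj, Nat.mod_eq_of_lt hj'] at h3
    subst hjj
    exact ⟨Nat.eq_of_mul_eq_mul_right hk (Nat.add_right_cancel h), rfl⟩
  -- canonical form
  have hcanon : ∀ m : ℕ, (∃ a b : ℕ, m = a * k + b * n) ↔
      ∃ (j : Fin k) (a : ℕ), m = a * k + (j : ℕ) * n := by
    intro m
    constructor
    · rintro ⟨a, b, rfl⟩
      refine ⟨⟨b % k, Nat.mod_lt _ hk⟩, a + (b / k) * n, ?_⟩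
      have hb : b % k + k * (b / k) = b := Nat.mod_add_div b k
      calc a * k + b * n = a * k + (b % k + k * (b / k)) * n := by rw [hb]
        _ = (a + b / k * n) * k + (b % k) * n := by ring
    · rintro ⟨j, a, rfl⟩; exact ⟨a, j, rfl⟩
  -- membership characterization of F φ for valid φ
  have hmemF : ∀ (φ : Fin k → ℕ),
      ((∀ i j : Fin k, i ≤ j → φ j ≤ φ i) ∧
        φ ⟨0, hk⟩ ≤ φ ⟨k - 1, Nat.sub_lt hk one_pos⟩ + n) →
      ∀ (j : Fin k) (a : ℕ),
        ((a * k + (j : ℕ) * n) ∈ ⋃ i : Fin k,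
          {m | ∃ g ∈ {m | ∃ a b : ℕ, m = a * k + b * n}, m = φ i * k + (i : ℕ) * n + g})
        ↔ φ j ≤ a := by
    rintro φ ⟨hmono, hwrap⟩ j a
    simp only [Set.mem_iUnion, Set.mem_setOf_eq]
    constructor
    · rintro ⟨i, g, ⟨a', b', rfl⟩, heq⟩
      set s : ℕ := (i : ℕ) + b' with hs
      have hrw : φ i * k + (i : ℕ) * n + (a' * k + b' * n)
          = (φ i + a' + s / k * n) * k + (s % k) * n := by
        have hb : s % k + k * (s / k) = s := Nat.mod_add_div s k
        calc φ i * k + (i : ℕ) * n + (a' * k + b' * n)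
            = (φ i + a') * k + s * n := by rw [hs]; ring
          _ = (φ i + a') * k + (s % k + k * (s / k)) * n := by rw [hb]
          _ = (φ i + a' + s / k * n) * k + (s % k) * n := by ring
      rw [hrw] at heq
      obtain ⟨ha, hj⟩ := huniq j.isLt (Nat.mod_lt _ hk) heq
      rcases Nat.eq_zero_or_pos (s / k) with hc | hc
      · -- s < k, so s % k = s = i + b', hence i ≤ j
        have hsk : s < k := ((Nat.div_eq_zero_iff).mp hc).resolve_left (by omega)
        have hjs : (j : ℕ) = s := by rw [hj, Nat.mod_eq_of_lt hsk]
        have hij : i ≤ j := by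
          rw [Fin.le_def, hjs]; omega
        have := hmono i j hij
        omega
      · have hn : n ≤ s / k * n := Nat.le_mul_of_pos_left n hc
        have h0j : φ j ≤ φ ⟨0, hk⟩ := hmono ⟨0, hk⟩ j (by rw [Fin.le_def]; simp)
        have hik : φ ⟨k - 1, Nat.sub_lt hk one_pos⟩ ≤ φ i := by
          refine hmono i ⟨k - 1, Nat.sub_lt hk one_pos⟩ ?_
          rw [Fin.le_def]
          exact Nat.le_sub_one_of_lt i.isLt
        linarith
    · intro hle
      refine ⟨j, (a - φ j) * k, ⟨a - φ j, 0, by ring⟩, ?_⟩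
      have : a = φ j + (a - φ j) := by omega
      calc a * k + (j : ℕ) * n = (φ j + (a - φ j)) * k + (j : ℕ) * n := by rw [← this]
        _ = φ j * k + (j : ℕ) * n + (a - φ j) * k := by ring
  refine ⟨?_, ?_, ?_, ?_⟩
  · -- injectivity
    intro φ ψ hφ hψ hFeq
    funext j
    have h1 : ψ j ≤ φ j := by
      have h := (hmemF φ hφ j (φ j)).mpr le_rfl
      exact (hmemF ψ hψ j (φ j)).mp (hFeq.subset h)
    have h2 : φ j ≤ ψ j := by
      have h := (hmemF ψ hψ j (ψ j)).mpr le_rfl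
      exact (hmemF φ hφ j (ψ j)).mp (hFeq.symm.subset h)
    omega
  · -- isMod (F φ)
    intro φ hφ
    refine ⟨⟨φ ⟨0, hk⟩ * k + (0 : ℕ) * n + 0, ?_⟩, ?_, ?_⟩
    · exact Set.mem_iUnion.mpr ⟨⟨0, hk⟩, 0, ⟨0, 0, by ring⟩, rfl⟩
    · rintro m hm
      obtain ⟨i, g, ⟨a', b', rfl⟩, rfl⟩ := Set.mem_iUnion.mp hm
      exact ⟨φ i + a', (i : ℕ) + b', by ring⟩
    · rintro d hd g ⟨a, b, rfl⟩
      obtain ⟨i, g1, ⟨a', b', rfl⟩, rfl⟩ := Set.mem_iUnion.mp hd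
      exact Set.mem_iUnion.mpr ⟨i, (a' + a) * k + (b' + b) * n,
        ⟨a' + a, b' + b, rfl⟩, by ring⟩
  · -- surjectivity
    rintro Δ ⟨hne, hsub, hclosed⟩
    have hex : ∀ j : Fin k, ∃ a : ℕ, a * k + (j : ℕ) * n ∈ Δ := by
      intro j
      obtain ⟨d, hd⟩ := hne
      obtain ⟨j0, a0, rfl⟩ := (hcanon d).mp (hsub hd)
      refine ⟨a0 + n, ?_⟩
      have hg : ((j : ℕ) + k - (j0 : ℕ)) * n ∈
          {m : ℕ | ∃ a b : ℕ, m = a * k + b * n} :=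
        ⟨0, (j : ℕ) + k - (j0 : ℕ), by ring⟩
      have := hclosed _ hd _ hg
      have heq : a0 * k + (j0 : ℕ) * n + ((j : ℕ) + k - (j0 : ℕ)) * n
          = (a0 + n) * k + (j : ℕ) * n := by
        have hj0 : (j0 : ℕ) + ((j : ℕ) + k - (j0 : ℕ)) = (j : ℕ) + k := by
          have := j0.isLt; omega
        calc a0 * k + (j0 : ℕ) * n + ((j : ℕ) + k - (j0 : ℕ)) * n
            = a0 * k + ((j0 : ℕ) + ((j : ℕ) + k - (j0 : ℕ))) * n := by ring
          _ = a0 * k + ((j : ℕ) + k) * n := by rw [hj0]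
          _ = (a0 + n) * k + (j : ℕ) * n := by ring
      rwa [heq] at this
    set φ : Fin k → ℕ := fun j => Nat.find (hex j) with hφdef
    have hspec : ∀ j : Fin k, φ j * k + (j : ℕ) * n ∈ Δ := fun j => Nat.find_spec (hex j)
    have hmin : ∀ (j : Fin k) (a : ℕ), a * k + (j : ℕ) * n ∈ Δ → φ j ≤ a :=
      fun j a h => Nat.find_min' (hex j) h
    have hup : ∀ (j : Fin k) (a : ℕ), φ j ≤ a → a * k + (j : ℕ) * n ∈ Δ := by
      intro j a hle
      induction a with
      | zero =>
        have : φ j = 0 := Nat.le_zero.mp hle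
        simpa [this] using hspec j
      | succ a ih =>
        rcases Nat.lt_or_ge (φ j) (a + 1) with h | h
        · have := hclosed _ (ih (by omega)) k ⟨1, 0, by ring⟩
          have heq : a * k + (j : ℕ) * n + k = (a + 1) * k + (j : ℕ) * n := by ring
          rwa [heq] at this
        · have : φ j = a + 1 := by omega
          rw [← this]; exact hspec j
    have hmono : ∀ i j : Fin k, i ≤ j → φ j ≤ φ i := by
      intro i j hij
      have hg : ((j : ℕ) - (i : ℕ)) * n ∈ {m : ℕ | ∃ a b : ℕ, m = a * k + b * n} :=
        ⟨0, (j : ℕ) - (i : ℕ), by ring⟩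
      have := hclosed _ (hspec i) _ hg
      have hij' : (i : ℕ) ≤ (j : ℕ) := hij
      have heq : φ i * k + (i : ℕ) * n + ((j : ℕ) - (i : ℕ)) * n
          = φ i * k + (j : ℕ) * n := by
        calc φ i * k + (i : ℕ) * n + ((j : ℕ) - (i : ℕ)) * n
            = φ i * k + ((i : ℕ) + ((j : ℕ) - (i : ℕ))) * n := by ring
          _ = φ i * k + (j : ℕ) * n := by rw [Nat.add_sub_cancel' hij']
      rw [heq] at this
      exact hmin j _ this
    have hwrap : φ ⟨0, hk⟩ ≤ φ ⟨k - 1, Nat.sub_lt hk one_pos⟩ + n := by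
      set j1 : Fin k := ⟨k - 1, Nat.sub_lt hk one_pos⟩ with hj1
      have := hclosed _ (hspec j1) n ⟨0, 1, by ring⟩
      have heq : φ j1 * k + (j1 : ℕ) * n + n
          = (φ j1 + n) * k + ((⟨0, hk⟩ : Fin k) : ℕ) * n := by
        have : (j1 : ℕ) = k - 1 := rfl
        rw [this]
        have hk1 : (k - 1) * n + n = k * n := by
          have : k - 1 + 1 = k := by omega
          calc (k - 1) * n + n = (k - 1 + 1) * n := by ring
            _ = k * n := by rw [this]
        calc φ j1 * k + (k - 1) * n + n = φ j1 * k + ((k - 1) * n + n) := by ring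
          _ = φ j1 * k + k * n := by rw [hk1]
          _ = (φ j1 + n) * k + ((⟨0, hk⟩ : Fin k) : ℕ) * n := by
              have h0 : ((⟨0, hk⟩ : Fin k) : ℕ) = 0 := rfl
              rw [h0]; ring
      rw [heq] at this
      exact hmin _ _ this
    refine ⟨φ, ⟨hmono, hwrap⟩, ?_⟩
    ext m
    simp only [Set.mem_iUnion, Set.mem_setOf_eq]
    constructor
    · rintro ⟨i, g, hg, rfl⟩
      exact hclosed _ (hspec i) _ hg
    · intro hm
      obtain ⟨j, a, rfl⟩ := (hcanon m).mp (hsub hm)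
      have hle : φ j ≤ a := hmin j a hm
      exact (by
        have := (hmemF φ ⟨hmono, hwrap⟩ j a).mpr hle
        simpa only [Set.mem_iUnion, Set.mem_setOf_eq] using this)
  · -- cardinality
    intro φ hφ
    set T : Finset ℕ := Finset.univ.biUnion
      (fun j : Fin k => (Finset.range (φ j)).image fun a => a * k + (j : ℕ) * n) with hT
    have hset : {m : ℕ | ∃ a b : ℕ, m = a * k + b * n} \
        (⋃ j : Fin k, {m | ∃ g ∈ {m : ℕ | ∃ a b : ℕ, m = a * k + b * n},
          m = φ j * k + (j : ℕ) * n + g}) = ↑T := by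
      ext m
      constructor
      · rintro ⟨hmem, hnot⟩
        obtain ⟨j, a, rfl⟩ := (hcanon m).mp hmem
        have hlt : a < φ j := by
          by_contra hge
          exact hnot ((hmemF φ hφ j a).mpr (by omega))
        exact Finset.mem_coe.mpr (Finset.mem_biUnion.mpr
          ⟨j, Finset.mem_univ j, Finset.mem_image.mpr
            ⟨a, Finset.mem_range.mpr hlt, rfl⟩⟩)
      · intro hm
        obtain ⟨j, -, hmem⟩ := Finset.mem_biUnion.mp (Finset.mem_coe.mp hm)
        obtain ⟨a, ha, rfl⟩ := Finset.mem_image.mp hmem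
        have hlt : a < φ j := Finset.mem_range.mp ha
        refine ⟨⟨a, (j : ℕ), rfl⟩, fun hmem2 => ?_⟩
        have := (hmemF φ hφ j a).mp hmem2
        omega
    rw [hset, Set.ncard_coe_finset, hT]
    rw [Finset.card_biUnion]
    · refine Finset.sum_congr rfl fun j _ => ?_
      rw [Finset.card_image_of_injective _ fun a b hab => (huniq j.isLt j.isLt hab).1,
        Finset.card_range]
    · intro i _ j _ hij
      simp only [Finset.disjoint_left, Finset.mem_image, Finset.mem_range]
      rintro m ⟨a, _, rfl⟩ ⟨b, _, hb⟩
      exact hij (Fin.ext ((huniq j.isLt i.isLt hb).2).symm)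
end

section
/- Let Γ = ⟨2, 2d+1⟩ for d ≥ 1, and let 1 ≤ ℓ ≤ 2d. Then every Γ-subsemimodule Δ ⊆ Γ with #(Γ \ Δ) = ℓ is of one of the following forms: (i) if ℓ is odd, Δ = (2i + Γ) ∪ (2d+1+2(ℓ−i) + Γ) for some integer i with ℓ/2 < i ≤ ℓ; (ii) if ℓ is even, either Δ is as in (i) for some ℓ/2 < i ≤ ℓ, or Δ = ℓ + Γ. In particular, the number of such Δ equals the number of integers in the interval [ℓ/2, ℓ]. -/
namespace Stmt9

def G (d : ℕ) : Set ℕ := {m | m % 2 = 0 ∨ 2 * d + 1 ≤ m}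

def N (d i j : ℕ) : Set ℕ :=
  {m | (m % 2 = 0 ∧ 2 * i ≤ m) ∨ (m % 2 = 1 ∧ 2 * d + 1 + 2 * j ≤ m)}

lemma gamma_eq (d : ℕ) :
    {m : ℕ | ∃ a b : ℕ, m = 2 * a + (2 * d + 1) * b} = G d := by
  ext m
  simp only [Set.mem_setOf_eq, G]
  constructor
  · rintro ⟨a, b, rfl⟩
    rcases Nat.even_or_odd b with ⟨c, rfl⟩ | ⟨c, rfl⟩
    · have : 2 * a + (2 * d + 1) * (c + c) = 2 * (a + (2 * d + 1) * c) := by ring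
      omega
    · have : 2 * a + (2 * d + 1) * (2 * c + 1) = 2 * (a + (2 * d + 1) * c) + (2 * d + 1) := by
        ring
      omega
  · intro h
    rcases Nat.mod_two_eq_zero_or_one m with hm | hm
    · refine ⟨m / 2, 0, ?_⟩
      have : (2 * d + 1) * 0 = 0 := by ring
      omega
    · refine ⟨(m - (2 * d + 1)) / 2, 1, ?_⟩
      have : (2 * d + 1) * 1 = 2 * d + 1 := by ring
      omega

lemma coset (d c : ℕ) :
    {m | ∃ g ∈ G d, m = c + g} =
      {m | (m % 2 = c % 2 ∧ c ≤ m) ∨ (¬ m % 2 = c % 2 ∧ c + (2 * d + 1) ≤ m)} := by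
  ext m
  simp only [Set.mem_setOf_eq, G]
  constructor
  · rintro ⟨g, hg, rfl⟩
    omega
  · intro h
    exact ⟨m - c, by omega, by omega⟩

lemma compl_eq (d i j : ℕ) :
    G d \ N d i j =
      ↑((Finset.range i).image (fun a => 2 * a) ∪
        (Finset.range j).image (fun b => 2 * d + 1 + 2 * b)) := by
  ext m
  simp only [G, N, Set.mem_diff, Set.mem_setOf_eq, Finset.coe_union, Set.mem_union,
    Finset.coe_image, Set.mem_image, Finset.mem_coe, Finset.mem_range]
  constructor
  · rintro ⟨hG, hN⟩
    rcases Nat.mod_two_eq_zero_or_one m with hm | hm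
    · exact Or.inl ⟨m / 2, by omega, by omega⟩
    · exact Or.inr ⟨(m - (2 * d + 1)) / 2, by omega, by omega⟩
  · rintro (⟨a, ha, rfl⟩ | ⟨b, hb, rfl⟩) <;> constructor <;> omega

lemma compl_ncard (d i j : ℕ) : (G d \ N d i j).ncard = i + j := by
  rw [compl_eq, Set.ncard_coe_finset, Finset.card_union_of_disjoint,
    Finset.card_image_of_injective _ (fun a b h => by omega),
    Finset.card_image_of_injective _ (fun a b h => by omega),
    Finset.card_range, Finset.card_range]
  rw [Finset.disjoint_left]
  rintro x hx hy
  simp only [Finset.mem_image, Finset.mem_range] at hx hy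
  obtain ⟨a, _, rfl⟩ := hx
  obtain ⟨b, _, hb⟩ := hy
  omega

lemma N_subset (d i j : ℕ) : N d i j ⊆ G d := fun m hm => by
  simp only [N, Set.mem_setOf_eq] at hm
  simp only [G, Set.mem_setOf_eq]
  omega

lemma N_closed (d i j : ℕ) (hji : j ≤ i) (hij : i ≤ j + 2 * d + 1) :
    ∀ x ∈ N d i j, ∀ g ∈ G d, x + g ∈ N d i j := by
  intro x hx g hg
  simp only [N, Set.mem_setOf_eq] at hx ⊢
  simp only [G, Set.mem_setOf_eq] at hg
  omega

lemma add_even (d : ℕ) (Δ : Set ℕ) (hmod : ∀ x ∈ Δ, ∀ g ∈ G d, x + g ∈ Δ)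
    (x : ℕ) (hx : x ∈ Δ) (k : ℕ) : x + 2 * k ∈ Δ := by
  induction k with
  | zero => simpa using hx
  | succ k ih =>
      have h2G : (2 : ℕ) ∈ G d := Or.inl rfl
      have := hmod _ ih 2 h2G
      have h2 : x + 2 * k + 2 = x + 2 * (k + 1) := by ring
      rwa [h2] at this

lemma classify (d ℓ : ℕ) (hℓ1 : 1 ≤ ℓ)
    (Δ : Set ℕ) (hΔΓ : Δ ⊆ G d) (hmod : ∀ x ∈ Δ, ∀ g ∈ G d, x + g ∈ Δ)
    (hcard : (G d \ Δ).ncard = ℓ) :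
    ∃ i : ℕ, ℓ ≤ 2 * i ∧ i ≤ ℓ ∧ Δ = N d i (ℓ - i) := by
  classical
  have hfin : (G d \ Δ).Finite := by
    by_contra h
    have := Set.Infinite.ncard h
    omega
  have hGinf : (G d).Infinite := by
    exact Set.infinite_of_injective_forall_mem (f := fun a : ℕ => 2 * a)
      (fun a b h => by simpa using h) (fun a => Or.inl (Nat.mul_mod_right 2 a))
  have hne : Δ.Nonempty := by
    by_contra h
    rw [Set.not_nonempty_iff_eq_empty] at h
    rw [h, Set.diff_empty] at hcard
    rw [Set.Infinite.ncard hGinf] at hcard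
    omega
  obtain ⟨x, hx⟩ := hne
  have hdG : (2 * d + 1 : ℕ) ∈ G d := Or.inr le_rfl
  have hE : ∃ a, 2 * a ∈ Δ := by
    rcases Nat.mod_two_eq_zero_or_one x with hx2 | hx2
    · exact ⟨x / 2, by rwa [show 2 * (x / 2) = x by omega]⟩
    · have h1 : x + (2 * d + 1) ∈ Δ := hmod _ hx _ hdG
      exact ⟨(x + (2 * d + 1)) / 2,
        by rwa [show 2 * ((x + (2 * d + 1)) / 2) = x + (2 * d + 1) by omega]⟩
  set i := Nat.find hE with hidef
  have hiΔ : 2 * i ∈ Δ := Nat.find_spec hE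
  have hO : ∃ b, 2 * d + 1 + 2 * b ∈ Δ := by
    have := hmod _ hiΔ _ hdG
    exact ⟨i, by rwa [show 2 * i + (2 * d + 1) = 2 * d + 1 + 2 * i by ring] at this⟩
  set j := Nat.find hO with hjdef
  have hjΔ : 2 * d + 1 + 2 * j ∈ Δ := Nat.find_spec hO
  have hΔeq : Δ = N d i j := by
    ext m
    simp only [N, Set.mem_setOf_eq]
    constructor
    · intro hm
      have hmG := hΔΓ hm
      simp only [G, Set.mem_setOf_eq] at hmG
      rcases Nat.mod_two_eq_zero_or_one m with h2 | h2
      · refine Or.inl ⟨h2, ?_⟩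
        have : i ≤ m / 2 := Nat.find_min' hE (by rwa [show 2 * (m / 2) = m by omega])
        omega
      · refine Or.inr ⟨h2, ?_⟩
        have hm1 : 2 * d + 1 ≤ m := by omega
        have : j ≤ (m - (2 * d + 1)) / 2 :=
          Nat.find_min' hO (by rwa [show 2 * d + 1 + 2 * ((m - (2 * d + 1)) / 2) = m by omega])
        omega
    · rintro (⟨h2, hle⟩ | ⟨h2, hle⟩)
      · have := add_even d Δ hmod _ hiΔ ((m - 2 * i) / 2)
        rwa [show 2 * i + 2 * ((m - 2 * i) / 2) = m by omega] at this
      · have := add_even d Δ hmod _ hjΔ ((m - (2 * d + 1 + 2 * j)) / 2)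
        rwa [show 2 * d + 1 + 2 * j + 2 * ((m - (2 * d + 1 + 2 * j)) / 2) = m by omega] at this
  have hji : j ≤ i := by
    have := hmod _ hiΔ _ hdG
    exact Nat.find_min' hO (by rwa [show 2 * i + (2 * d + 1) = 2 * d + 1 + 2 * i by ring] at this)
  have hij : i + j = ℓ := by
    rw [hΔeq, compl_ncard] at hcard
    omega
  refine ⟨i, by omega, by omega, ?_⟩
  rw [show ℓ - i = j by omega]
  exact hΔeq

lemma N_injOn (d ℓ : ℕ) : Set.InjOn (fun i => N d i (ℓ - i)) (Set.Icc (ℓ - ℓ / 2) ℓ) := by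
  intro a ha b hb h
  simp only at h
  have h1 : 2 * a ∈ N d a (ℓ - a) := by
    simp only [N, Set.mem_setOf_eq]; omega
  have h2 : 2 * b ∈ N d b (ℓ - b) := by
    simp only [N, Set.mem_setOf_eq]; omega
  rw [h] at h1
  rw [← h] at h2
  simp only [N, Set.mem_setOf_eq] at h1 h2
  omega

end Stmt9

/-- classification of Γ-subsemimodules of Γ = ⟨2, 2d+1⟩ with
complement of size ℓ, 1 ≤ ℓ ≤ 2d, and their count #[ℓ/2, ℓ] = ⌊ℓ/2⌋ + 1. -/
theorem stmt9 (d ℓ : ℕ) (hd : 1 ≤ d) (hℓ1 : 1 ≤ ℓ) (hℓ2 : ℓ ≤ 2 * d)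
    (Γ : Set ℕ) (hΓ : Γ = {m | ∃ a b : ℕ, m = 2 * a + (2 * d + 1) * b})
    (Δ : Set ℕ) (hΔΓ : Δ ⊆ Γ) (hmod : ∀ x ∈ Δ, ∀ g ∈ Γ, x + g ∈ Δ)
    (hcard : (Γ \ Δ).ncard = ℓ) :
    ((Odd ℓ → ∃ i : ℕ, ℓ < 2 * i ∧ i ≤ ℓ ∧
        Δ = {m | ∃ g ∈ Γ, m = 2 * i + g} ∪
              {m | ∃ g ∈ Γ, m = 2 * d + 1 + 2 * (ℓ - i) + g}) ∧
      (Even ℓ → (∃ i : ℕ, ℓ < 2 * i ∧ i ≤ ℓ ∧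
        Δ = {m | ∃ g ∈ Γ, m = 2 * i + g} ∪
              {m | ∃ g ∈ Γ, m = 2 * d + 1 + 2 * (ℓ - i) + g}) ∨
        Δ = {m | ∃ g ∈ Γ, m = ℓ + g})) ∧
    {Δ' : Set ℕ | Δ' ⊆ Γ ∧ (∀ x ∈ Δ', ∀ g ∈ Γ, x + g ∈ Δ') ∧
        (Γ \ Δ').ncard = ℓ}.ncard = ℓ / 2 + 1 := by
  subst hΓ
  rw [Stmt9.gamma_eq d] at hΔΓ hmod hcard ⊢
  obtain ⟨i, h1, h2, hN⟩ := Stmt9.classify d ℓ hℓ1 Δ hΔΓ hmod hcard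
  refine ⟨⟨?_, ?_⟩, ?_⟩
  · intro hodd
    rw [Nat.odd_iff] at hodd
    refine ⟨i, by omega, h2, ?_⟩
    rw [hN]
    ext m
    simp only [Stmt9.coset, Stmt9.N, Set.mem_union, Set.mem_setOf_eq]
    omega
  · intro heven
    rw [Nat.even_iff] at heven
    rcases eq_or_lt_of_le h1 with heq | hlt
    · right
      rw [hN]
      ext m
      simp only [Stmt9.coset, Stmt9.N, Set.mem_setOf_eq]
      omega
    · left
      refine ⟨i, hlt, h2, ?_⟩
      rw [hN]
      ext m
      simp only [Stmt9.coset, Stmt9.N, Set.mem_union, Set.mem_setOf_eq]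
      omega
  · have hset : {Δ' : Set ℕ | Δ' ⊆ Stmt9.G d ∧ (∀ x ∈ Δ', ∀ g ∈ Stmt9.G d, x + g ∈ Δ') ∧
        (Stmt9.G d \ Δ').ncard = ℓ}
        = (fun i => Stmt9.N d i (ℓ - i)) '' Set.Icc (ℓ - ℓ / 2) ℓ := by
      ext Δ'
      simp only [Set.mem_setOf_eq, Set.mem_image, Set.mem_Icc]
      constructor
      · rintro ⟨hs, hc, hn⟩
        obtain ⟨i', hi1, hi2, hNe⟩ := Stmt9.classify d ℓ hℓ1 Δ' hs hc hn
        exact ⟨i', ⟨by omega, hi2⟩, hNe.symm⟩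
      · rintro ⟨i', ⟨hi1, hi2⟩, rfl⟩
        refine ⟨Stmt9.N_subset d _ _, Stmt9.N_closed d _ _ (by omega) (by omega), ?_⟩
        rw [Stmt9.compl_ncard]
        omega
    rw [hset, Set.ncard_image_of_injOn (Stmt9.N_injOn d ℓ), ← Finset.coe_Icc,
      Set.ncard_coe_finset, Nat.card_Icc]
    omega
end

section
/- Let Γ be a monomial numerical semigroup, i.e., for every x ∈ ℕ \ Γ one has Γ ∩ (x + Γ) ⊆ [c(x), ∞), where c(x) = min{n : [n,∞) ⊆ Γ ∪ (x + Γ)}. Let Δ be a Γ-subsemimodule with finite complement and conductor c(Δ) := min{i ∈ Δ : i + ℕ ⊆ Δ}. If γ₁ > γ₂ are two minimal generators of Δ, then every element σ ∈ (γ₁ + Γ) ∩ (γ₂ + Γ) satisfies σ ≥ c(Δ). -/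
/-- for a monomial numerical semigroup Γ and a Γ-subsemimodule Δ
with minimal generators γ₁ > γ₂, every common element of γ₁ + Γ and γ₂ + Γ is
at least the conductor c(Δ). -/
theorem stmt11 (Γ : Set ℕ)
    (hΓ0 : 0 ∈ Γ) (hΓadd : ∀ a ∈ Γ, ∀ b ∈ Γ, a + b ∈ Γ) (hΓcof : (Γᶜ).Finite)
    (hmono : ∀ x : ℕ, x ∉ Γ → ∀ m ∈ Γ, (∃ g ∈ Γ, m = x + g) →
      sInf {n : ℕ | ∀ k : ℕ, n ≤ k → k ∈ Γ ∨ ∃ g ∈ Γ, k = x + g} ≤ m)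
    (Δ : Set ℕ) (hΔΓ : Δ ⊆ Γ) (hmod : ∀ d ∈ Δ, ∀ g ∈ Γ, d + g ∈ Δ)
    (hfin : (Γ \ Δ).Finite)
    (γ₁ γ₂ : ℕ) (h21 : γ₂ < γ₁) (hγ₁ : γ₁ ∈ Δ) (hγ₂ : γ₂ ∈ Δ)
    (hmin₁ : ¬ ∃ d ∈ Δ, ∃ g ∈ Γ, g ≠ 0 ∧ γ₁ = d + g)
    (hmin₂ : ¬ ∃ d ∈ Δ, ∃ g ∈ Γ, g ≠ 0 ∧ γ₂ = d + g) :
    ∀ σ : ℕ, (∃ g ∈ Γ, σ = γ₁ + g) → (∃ g ∈ Γ, σ = γ₂ + g) →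
      sInf {i : ℕ | i ∈ Δ ∧ ∀ k : ℕ, i ≤ k → k ∈ Δ} ≤ σ := by
  rintro σ ⟨g₁, hg₁, rfl⟩ ⟨g₂, hg₂, hσ2⟩
  set x := γ₁ - γ₂ with hx
  have hxΓ : x ∉ Γ := by
    intro hxg
    exact hmin₁ ⟨γ₂, hγ₂, x, hxg, by omega, by omega⟩
  have hg2x : g₂ = x + g₁ := by omega
  -- the set defining c(x) is nonempty
  have hS : {n : ℕ | ∀ k : ℕ, n ≤ k → k ∈ Γ ∨ ∃ g ∈ Γ, k = x + g}.Nonempty := by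
    obtain ⟨b, hb⟩ := hΓcof.bddAbove
    refine ⟨b + 1, fun k hk => Or.inl ?_⟩
    by_contra hkΓ
    exact absurd (hb hkΓ) (by omega)
  have hcx : sInf {n : ℕ | ∀ k : ℕ, n ≤ k → k ∈ Γ ∨ ∃ g ∈ Γ, k = x + g} ≤ g₂ :=
    hmono x hxΓ g₂ hg₂ ⟨g₁, hg₁, hg2x⟩
  have hmem := Nat.sInf_mem hS
  apply Nat.sInf_le
  refine ⟨hmod γ₁ hγ₁ g₁ hg₁, fun k hk => ?_⟩
  have hdich := hmem (k - γ₂) (by omega)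
  rcases hdich with h | ⟨g, hg, hge⟩
  · have hkeq : k = γ₂ + (k - γ₂) := by omega
    rw [hkeq]; exact hmod γ₂ hγ₂ _ h
  · have hkeq : k = γ₁ + g := by omega
    rw [hkeq]; exact hmod γ₁ hγ₁ g hg
end

section
/- Let Γ ⊆ ℕ be a semigroup of one of the following forms: (i) Γ_{m,s,b} = {im : i = 0,…,s} ∪ [sm + b, ∞) with 1 ≤ b < m and s ≥ 1; (ii) Γ_{m,r} = {0} ∪ [m, m+r−1] ∪ [m+r+1, ∞) with 2 ≤ r ≤ m−1; (iii) Γ_m = {0, m} ∪ [m+2, 2m] ∪ [2m+2, ∞) with m ≥ 3. Then for every x ∈ ℕ \ Γ, Γ ∩ (x + Γ) ⊆ [c(x), ∞), where c(x) = min{n ∈ ℕ : [n, ∞) ⊆ Γ ∪ (x + Γ)}. -/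
/-- the semigroups Γ_{m,s,b}, Γ_{m,r} and Γ_m are monomial:
for every x ∉ Γ, Γ ∩ (x + Γ) ⊆ [c(x), ∞). -/
theorem stmt12 (Γ : Set ℕ)
    (hform :
      (∃ m s b : ℕ, 1 ≤ b ∧ b < m ∧ 1 ≤ s ∧
        Γ = {x | ∃ i ≤ s, x = i * m} ∪ {x | s * m + b ≤ x}) ∨
      (∃ m r : ℕ, 2 ≤ r ∧ r ≤ m - 1 ∧
        Γ = {0} ∪ {x | m ≤ x ∧ x ≤ m + r - 1} ∪ {x | m + r + 1 ≤ x}) ∨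
      (∃ m : ℕ, 3 ≤ m ∧
        Γ = {0, m} ∪ {x | m + 2 ≤ x ∧ x ≤ 2 * m} ∪ {x | 2 * m + 2 ≤ x})) :
    ∀ x : ℕ, x ∉ Γ → ∀ m ∈ Γ, (∃ g ∈ Γ, m = x + g) →
      sInf {n : ℕ | ∀ k : ℕ, n ≤ k → k ∈ Γ ∨ ∃ g ∈ Γ, k = x + g} ≤ m := by
  intro x hx M hM hMx
  obtain ⟨g, hg, hMg⟩ := hMx
  refine Nat.sInf_le ?_
  show ∀ k : ℕ, M ≤ k → k ∈ Γ ∨ ∃ g ∈ Γ, k = x + g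
  rcases hform with ⟨m, s, b, hb1, hbm, hs, rfl⟩ | ⟨m, r, hr2, hrm, rfl⟩ | ⟨m, hm3, rfl⟩
  · simp only [Set.mem_union, Set.mem_setOf_eq] at hx hM hg ⊢
    have hM' : s * m + b ≤ M := by
      rcases hM with ⟨i, hi, hMi⟩ | h
      · exfalso
        rcases hg with ⟨j, hj, hgj⟩ | h2
        · have hjm : j * m ≤ i * m := by omega
          have hji : j ≤ i := Nat.le_of_mul_le_mul_right hjm (by omega)
          exact hx (Or.inl ⟨i - j, by omega, by rw [Nat.sub_mul]; omega⟩)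
        · have him : i * m ≤ s * m := Nat.mul_le_mul_right m hi
          omega
      · exact h
    intro k hk
    exact Or.inl (Or.inr (by omega))
  · simp only [Set.mem_union, Set.mem_setOf_eq, Set.mem_singleton_iff] at hx hM hg ⊢
    intro k hk
    by_cases hkin : (k = 0 ∨ (m ≤ k ∧ k ≤ m + r - 1)) ∨ m + r + 1 ≤ k
    · exact Or.inl hkin
    · right
      exact ⟨k - x, by omega, by omega⟩
  · simp only [Set.mem_union, Set.mem_setOf_eq, Set.mem_insert_iff,
      Set.mem_singleton_iff] at hx hM hg ⊢
    intro k hk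
    by_cases hkin : ((k = 0 ∨ k = m) ∨ (m + 2 ≤ k ∧ k ≤ 2 * m)) ∨ 2 * m + 2 ≤ k
    · exact Or.inl hkin
    · right
      exact ⟨k - x, by omega, by omega⟩
end

section
/- Let Γ = ⟨p, q⟩ with gcd(p, q) = 1, Δ ⊆ Γ a Γ-subsemimodule with finite nonempty complement, γ_Δ = max(Γ \ Δ), and m(Δ) = Δ ∪ {γ_Δ}. Then the set difference of minimal generating sets satisfies T_{m(Δ)} \ T_Δ = {γ_Δ}, and every generator γ ∈ T_Δ \ T_{m(Δ)} is of the form γ = γ_Δ + x with x ∈ {p, q}. -/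
/-- for Γ = ⟨p,q⟩ and m(Δ) = Δ ∪ {γ_Δ}, the minimal generating
sets satisfy T_{m(Δ)} \ T_Δ = {γ_Δ}, and every γ ∈ T_Δ \ T_{m(Δ)} equals
γ_Δ + p or γ_Δ + q. -/
theorem stmt14 (p q : ℕ) (hp : 2 ≤ p) (hq : 2 ≤ q) (hcop : Nat.Coprime p q)
    (Γ : Set ℕ) (hΓ : Γ = {m | ∃ a b : ℕ, m = a * p + b * q})
    (Δ : Set ℕ) (hΔΓ : Δ ⊆ Γ) (hmod : ∀ d ∈ Δ, ∀ g ∈ Γ, d + g ∈ Δ)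
    (hfin : (Γ \ Δ).Finite) (hne : (Γ \ Δ).Nonempty)
    (γΔ : ℕ) (hγΔ : γΔ ∈ Γ \ Δ) (hmax : ∀ x ∈ Γ \ Δ, x ≤ γΔ)
    (T : Set ℕ → Set ℕ)
    (hT : T = fun D => {x | x ∈ D ∧ ¬ ∃ d ∈ D, ∃ g ∈ Γ, g ≠ 0 ∧ x = d + g}) :
    T (Δ ∪ {γΔ}) \ T Δ = {γΔ} ∧
      ∀ γ ∈ T Δ \ T (Δ ∪ {γΔ}), γ = γΔ + p ∨ γ = γΔ + q := by
  subst hT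
  -- key lemma: γΔ + x ∈ Δ for nonzero x ∈ Γ
  have key : ∀ x ∈ Γ, x ≠ 0 → γΔ + x ∈ Δ := by
    intro x hx hx0
    by_contra hnot
    have hmem : γΔ + x ∈ Γ := by
      rw [hΓ] at hγΔ hx ⊢
      obtain ⟨a0, b0, h0⟩ := hγΔ.1
      obtain ⟨a1, b1, h1⟩ := hx
      exact ⟨a0 + a1, b0 + b1, by rw [h0, h1]; ring⟩
    have := hmax _ ⟨hmem, hnot⟩
    omega
  constructor
  · ext x
    simp only [Set.mem_diff, Set.mem_setOf_eq, Set.mem_union, Set.mem_singleton_iff]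
    constructor
    · rintro ⟨⟨hxΔ', hnd⟩, hnT⟩
      by_contra hx
      rcases hxΔ' with hxΔ | hxγ
      · have : ∃ d ∈ Δ, ∃ g ∈ Γ, g ≠ 0 ∧ x = d + g := by
          by_contra h
          exact hnT ⟨hxΔ, h⟩
        obtain ⟨d, hd, g, hg, hg0, hxe⟩ := this
        exact hnd ⟨d, Or.inl hd, g, hg, hg0, hxe⟩
      · exact hx hxγ
    · rintro rfl
      refine ⟨⟨Or.inr rfl, ?_⟩, ?_⟩
      · rintro ⟨d, hd, g, hg, hg0, heq⟩
        rcases hd with hd | rfl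
        · exact hγΔ.2 (heq ▸ hmod d hd g hg)
        · omega
      · intro hTx
        exact hγΔ.2 hTx.1
  · intro γ hγ
    simp only [Set.mem_diff, Set.mem_setOf_eq, Set.mem_union, Set.mem_singleton_iff] at hγ
    obtain ⟨⟨hγmem, hnd⟩, hnT'⟩ := hγ
    have hdec : ∃ d, (d ∈ Δ ∨ d = γΔ) ∧ ∃ g ∈ Γ, g ≠ 0 ∧ γ = d + g := by
      by_contra h
      push_neg at h
      refine hnT' ⟨Or.inl hγmem, ?_⟩
      rintro ⟨d, hd, g, hg, hg0, heq⟩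
      exact h d hd g hg hg0 heq
    obtain ⟨d, hd, g, hg, hg0, hγeq⟩ := hdec
    rcases hd with hd | hdeq
    · exact absurd ⟨d, hd, g, hg, hg0, hγeq⟩ hnd
    · subst hdeq
      obtain ⟨a, b, rfl⟩ := hΓ ▸ hg
      have habsurd : ∀ x ∈ Γ, x ≠ 0 → ∀ g' ∈ Γ, g' ≠ 0 →
          a * p + b * q = x + g' → False := by
        intro x hx hx0 g' hg' hg0' hsum
        exact hnd ⟨d + x, key x hx hx0, g', hg', hg0', by omega⟩
      have hpΓ : p ∈ Γ := hΓ ▸ ⟨1, 0, by ring⟩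
      have hqΓ : q ∈ Γ := hΓ ▸ ⟨0, 1, by ring⟩
      rcases Nat.eq_zero_or_pos a with rfl | ha
      · rcases Nat.eq_zero_or_pos b with rfl | hb
        · simp at hg0
        · -- g = b*q, b ≥ 1
          rcases Nat.lt_or_ge b 2 with hb2 | hb2
          · right; have : b = 1 := by omega
            subst this; rw [hγeq]; ring
          · exfalso
            refine habsurd q hqΓ (by omega) ((b-1) * q) (hΓ ▸ ⟨0, b-1, by ring⟩) ?_ ?_
            · have : 1 * q ≤ (b-1) * q := Nat.mul_le_mul_right q (by omega)
              omega
            · have hb1 : b = (b-1) + 1 := by omega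
              calc 0 * p + b * q = 0 * p + ((b-1)+1) * q := by rw [← hb1]
                _ = q + (b-1) * q := by ring
      · -- a ≥ 1
        rcases Nat.eq_zero_or_pos b with rfl | hb
        · rcases Nat.lt_or_ge a 2 with ha2 | ha2
          · left; have : a = 1 := by omega
            subst this; rw [hγeq]; ring
          · exfalso
            refine habsurd p hpΓ (by omega) ((a-1) * p) (hΓ ▸ ⟨a-1, 0, by ring⟩) ?_ ?_
            · have : 1 * p ≤ (a-1) * p := Nat.mul_le_mul_right p (by omega)
              omega
            · have ha1 : a = (a-1) + 1 := by omega
              calc a * p + 0 * q = ((a-1)+1) * p + 0 * q := by rw [← ha1]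
                _ = p + (a-1) * p := by ring
        · exfalso
          refine habsurd p hpΓ (by omega) ((a-1) * p + b * q) (hΓ ▸ ⟨a-1, b, rfl⟩) ?_ ?_
          · have : 1 * q ≤ b * q := Nat.mul_le_mul_right q (by omega)
            omega
          · have ha1 : a = (a-1) + 1 := by omega
            calc a * p + b * q = ((a-1)+1) * p + b * q := by rw [← ha1]
              _ = p + ((a-1) * p + b * q) := by ring
end

section
/- Let Γ = ⟨2, 2d+1⟩. For every integer k with 1 ≤ k ≤ d, the number of Γ-subsemimodules Δ ⊆ Γ with #(Γ \ Δ) = 2k equals the number with #(Γ \ Δ) = 2k+1, and both equal k + 1. -/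
private def G (d : ℕ) : Set ℕ := {m | m % 2 = 0 ∨ 2 * d + 1 ≤ m}

private def D (d i j : ℕ) : Set ℕ :=
  {m | (m % 2 = 0 ∧ 2 * i ≤ m) ∨ (m % 2 = 1 ∧ 2 * d + 1 + 2 * j ≤ m)}

private lemma gamma_eq (d : ℕ) :
    {m : ℕ | ∃ a b : ℕ, m = 2 * a + (2 * d + 1) * b} = G d := by
  ext m
  simp only [G, Set.mem_setOf_eq]
  constructor
  · rintro ⟨a, b, rfl⟩
    rcases Nat.even_or_odd b with ⟨c, rfl⟩ | ⟨c, rfl⟩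
    · have h : 2 * a + (2 * d + 1) * (c + c) = 2 * (a + (2 * d + 1) * c) := by ring
      omega
    · have h : 2 * a + (2 * d + 1) * (2 * c + 1) = 2 * (a + (2 * d + 1) * c) + 2 * d + 1 := by
        ring
      omega
  · intro h
    by_cases h2 : m % 2 = 0
    · exact ⟨m / 2, 0, by rw [mul_zero]; omega⟩
    · exact ⟨(m - (2 * d + 1)) / 2, 1, by rw [mul_one]; omega⟩

private lemma G_infinite (d : ℕ) : (G d).Infinite :=
  (Set.Ici_infinite (2 * d + 1)).mono (fun m hm => Or.inr hm)

private lemma compl_D (d i j : ℕ) :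
    G d \ D d i j =
      ↑((Finset.range i).image (fun t => 2 * t) ∪
        (Finset.range j).image (fun t => 2 * d + 1 + 2 * t)) := by
  ext m
  simp only [G, D, Set.mem_diff, Set.mem_setOf_eq, Finset.coe_union, Set.mem_union,
    Finset.coe_image, Set.mem_image, Finset.mem_coe, Finset.mem_range]
  constructor
  · rintro ⟨hg, hnd⟩
    by_cases h2 : m % 2 = 0
    · exact Or.inl ⟨m / 2, by omega, by omega⟩
    · exact Or.inr ⟨(m - (2 * d + 1)) / 2, by omega, by omega⟩
  · rintro (⟨t, ht, rfl⟩ | ⟨t, ht, rfl⟩) <;> omega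

private lemma compl_D_ncard (d i j : ℕ) : (G d \ D d i j).ncard = i + j := by
  rw [compl_D, Set.ncard_coe_finset, Finset.card_union_of_disjoint]
  · rw [Finset.card_image_of_injective _ (fun a b h => by omega),
      Finset.card_image_of_injective _ (fun a b h => by omega),
      Finset.card_range, Finset.card_range]
  · rw [Finset.disjoint_left]
    rintro m hm1 hm2
    simp only [Finset.mem_image, Finset.mem_range] at hm1 hm2
    obtain ⟨a, _, rfl⟩ := hm1
    obtain ⟨b, _, hb⟩ := hm2
    omega

private lemma count (d k n : ℕ) (hk1 : 1 ≤ k) (hkd : k ≤ d)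
    (hn1 : 2 * k ≤ n) (hn2 : n ≤ 2 * k + 1) :
    {Δ : Set ℕ | Δ ⊆ G d ∧ (∀ x ∈ Δ, ∀ g ∈ G d, x + g ∈ Δ) ∧
        (G d \ Δ).ncard = n}.ncard = k + 1 := by
  have h2d1 : (2 * d + 1 : ℕ) ∈ G d := Or.inr le_rfl
  have hset : {Δ : Set ℕ | Δ ⊆ G d ∧ (∀ x ∈ Δ, ∀ g ∈ G d, x + g ∈ Δ) ∧
      (G d \ Δ).ncard = n} = (fun j => D d (n - j) j) '' ↑(Finset.Iic k) := by
    ext Δ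
    simp only [Set.mem_setOf_eq, Set.mem_image, Finset.coe_Iic, Set.mem_Iic]
    constructor
    · rintro ⟨hsub, hcl, hcard⟩
      have hne : Δ.Nonempty := by
        by_contra h
        rw [Set.not_nonempty_iff_eq_empty] at h
        subst h
        rw [Set.diff_empty, (G_infinite d).ncard] at hcard
        omega
      obtain ⟨x, hx⟩ := hne
      have hx2 : x + (2 * d + 1) ∈ Δ := hcl x hx _ h2d1
      have hEx : {t | 2 * t ∈ Δ}.Nonempty := by
        rcases Nat.even_or_odd x with ⟨c, rfl⟩ | ⟨c, rfl⟩
        · exact ⟨c, by show 2 * c ∈ Δ; rw [two_mul]; exact hx⟩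
        · refine ⟨c + d + 1, ?_⟩
          show 2 * (c + d + 1) ∈ Δ
          have h : 2 * (c + d + 1) = 2 * c + 1 + (2 * d + 1) := by ring
          rw [h]; exact hx2
      have hOx : {t | 2 * d + 1 + 2 * t ∈ Δ}.Nonempty := by
        rcases Nat.even_or_odd x with ⟨c, rfl⟩ | ⟨c, rfl⟩
        · refine ⟨c, ?_⟩
          show 2 * d + 1 + 2 * c ∈ Δ
          have h : 2 * d + 1 + 2 * c = c + c + (2 * d + 1) := by ring
          rw [h]; exact hx2
        · have hG := hsub hx
          simp only [G, Set.mem_setOf_eq] at hG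
          refine ⟨c - d, ?_⟩
          show 2 * d + 1 + 2 * (c - d) ∈ Δ
          have h : 2 * d + 1 + 2 * (c - d) = 2 * c + 1 := by omega
          rw [h]; exact hx
      set i := sInf {t | 2 * t ∈ Δ} with hi
      set j := sInf {t | 2 * d + 1 + 2 * t ∈ Δ} with hj
      have hiΔ : 2 * i ∈ Δ := Nat.sInf_mem hEx
      have hjΔ : 2 * d + 1 + 2 * j ∈ Δ := Nat.sInf_mem hOx
      have hji : j ≤ i := by
        apply Nat.sInf_le
        show 2 * d + 1 + 2 * i ∈ Δ
        have h : 2 * d + 1 + 2 * i = 2 * i + (2 * d + 1) := by ring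
        rw [h]; exact hcl _ hiΔ _ h2d1
      have hij : i ≤ j + (2 * d + 1) := by
        apply Nat.sInf_le
        show 2 * (j + (2 * d + 1)) ∈ Δ
        have h : 2 * (j + (2 * d + 1)) = 2 * d + 1 + 2 * j + (2 * d + 1) := by ring
        rw [h]; exact hcl _ hjΔ _ h2d1
      have hΔ : Δ = D d i j := by
        ext m
        constructor
        · intro hm
          have hmG := hsub hm
          simp only [G, Set.mem_setOf_eq] at hmG
          by_cases h2 : m % 2 = 0
          · have hle : i ≤ m / 2 := by
              apply Nat.sInf_le
              show 2 * (m / 2) ∈ Δ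
              have h : 2 * (m / 2) = m := by omega
              rw [h]; exact hm
            exact Or.inl ⟨h2, by omega⟩
          · have hle : j ≤ (m - (2 * d + 1)) / 2 := by
              apply Nat.sInf_le
              show 2 * d + 1 + 2 * ((m - (2 * d + 1)) / 2) ∈ Δ
              have h : 2 * d + 1 + 2 * ((m - (2 * d + 1)) / 2) = m := by omega
              rw [h]; exact hm
            exact Or.inr ⟨by omega, by omega⟩
        · rintro (⟨h2, hle⟩ | ⟨h2, hle⟩)
          · have h := hcl _ hiΔ (m - 2 * i) (by left; omega)
            have heq : 2 * i + (m - 2 * i) = m := by omega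
            rwa [heq] at h
          · have h := hcl _ hjΔ (m - (2 * d + 1 + 2 * j)) (by left; omega)
            have heq : 2 * d + 1 + 2 * j + (m - (2 * d + 1 + 2 * j)) = m := by omega
            rwa [heq] at h
      rw [hΔ, compl_D_ncard] at hcard
      refine ⟨j, by omega, ?_⟩
      have h : n - j = i := by omega
      rw [h, hΔ]
    · rintro ⟨j, hjk, rfl⟩
      have hji : j ≤ n - j := by omega
      have hij : n - j ≤ j + (2 * d + 1) := by omega
      refine ⟨?_, ?_, ?_⟩
      · intro m hm
        simp only [D, G, Set.mem_setOf_eq] at *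
        omega
      · intro xx hxx g hg
        simp only [D, G, Set.mem_setOf_eq] at *
        omega
      · rw [compl_D_ncard]; omega
  have hinj : Set.InjOn (fun j => D d (n - j) j) ↑(Finset.Iic k) := by
    intro a ha b hb h
    simp only at h
    have h1 : (2 * d + 1 + 2 * a) ∈ D d (n - a) a := Or.inr ⟨by omega, le_rfl⟩
    have h2 : (2 * d + 1 + 2 * b) ∈ D d (n - b) b := Or.inr ⟨by omega, le_rfl⟩
    rw [h] at h1
    rw [← h] at h2
    rcases h1 with ⟨hp, _⟩ | ⟨_, hle1⟩
    · omega
    · rcases h2 with ⟨hp, _⟩ | ⟨_, hle2⟩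
      · omega
      · omega
  rw [hset, Set.ncard_image_of_injOn hinj, Set.ncard_coe_finset, Nat.card_Iic]

/-- for Γ = ⟨2, 2d+1⟩ and 1 ≤ k ≤ d, the numbers of
Γ-subsemimodules with complement of size 2k and of size 2k+1 both equal k+1. -/
theorem stmt16 (d k : ℕ) (hd : 1 ≤ d) (hk1 : 1 ≤ k) (hk2 : k ≤ d)
    (Γ : Set ℕ) (hΓ : Γ = {m | ∃ a b : ℕ, m = 2 * a + (2 * d + 1) * b}) :
    {Δ : Set ℕ | Δ ⊆ Γ ∧ (∀ x ∈ Δ, ∀ g ∈ Γ, x + g ∈ Δ) ∧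
        (Γ \ Δ).ncard = 2 * k}.ncard = k + 1 ∧
      {Δ : Set ℕ | Δ ⊆ Γ ∧ (∀ x ∈ Δ, ∀ g ∈ Γ, x + g ∈ Δ) ∧
        (Γ \ Δ).ncard = 2 * k + 1}.ncard = k + 1 := by
  subst hΓ
  rw [gamma_eq d]
  exact ⟨count d k (2 * k) hk1 hk2 le_rfl (by omega),
    count d k (2 * k + 1) hk1 hk2 (by omega) le_rfl⟩
end
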